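/- Let (Ω, Σ, μ) be a measure space, d ≥ 1, and let κ : ℝ → ℝ be a measurable function satisfying: there exist constants 0 < α < β such that α(t − s) ≤ κ(t)t − κ(s)s ≤ β(t − s) for all 0 ≤ s ≤ t. Let p, q, r : Ω → ℝ^d be measurable and square integrable with respect to μ. Then |∫ ⟨κ(|p(x)|)p(x) − κ(|q(x)|)q(x), r(x)⟩ dμ(x)| ≤ β (∫ |p(x) − q(x)|² dμ(x))^{1/2} (∫ |r(x)|² dμ(x))^{1/2}. -/

import Mathlib

open scoped RealInnerProductSpace
open MeasureTheory

private lemma pointwise_lip_aux {E : Type*} [NormedAddCommGroup E] [InnerProductSpace ℝ E]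
    (κ : ℝ → ℝ) (α β : ℝ) (hα : 0 < α) (hαβ : α < β)
    (h : ∀ s t : ℝ, 0 ≤ s → s ≤ t →
      α * (t - s) ≤ κ t * t - κ s * s ∧ κ t * t - κ s * s ≤ β * (t - s))
    (a b : E) (hba : ‖b‖ ≤ ‖a‖) :
    ‖κ ‖a‖ • a - κ ‖b‖ • b‖ ≤ β * ‖a - b‖ := by
  have hβ : (0:ℝ) < β := hα.trans hαβ
  set t : ℝ := ‖a‖ with htdef
  set s : ℝ := ‖b‖ with hsdef
  have ht : 0 ≤ t := norm_nonneg a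
  have hs : 0 ≤ s := norm_nonneg b
  set c : ℝ := ⟪a, b⟫ with hcdef
  have hc1 : c ≤ t * s := real_inner_le_norm a b
  have hc2 : -(t * s) ≤ c := by
    have := abs_real_inner_le_norm a b
    rw [abs_le] at this; exact this.1
  have h1 := (h s t hs hba).2
  have h1' := (h s t hs hba).1
  have hφs0 : 0 ≤ κ s * s := by have := (h 0 s le_rfl hs).1; nlinarith
  have hφt0 : 0 ≤ κ t * t := by have := (h 0 t le_rfl ht).1; nlinarith
  have hφtβ : κ t * t ≤ β * t := by have := (h 0 t le_rfl ht).2; nlinarith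
  have hφsβ : κ s * s ≤ β * s := by have := (h 0 s le_rfl hs).2; nlinarith
  rcases eq_or_lt_of_le hs with hs0 | hspos
  · -- s = 0, so b = 0
    have hb0 : b = 0 := by
      have : ‖b‖ = 0 := hs0.symm
      simpa [norm_eq_zero] using this
    subst hb0
    simp only [sub_zero, smul_zero]
    rw [norm_smul, Real.norm_eq_abs]
    have : |κ t| * t = |κ t * t| := by rw [abs_mul, abs_of_nonneg ht]
    rw [htdef] at this ⊢
    rw [this, abs_of_nonneg hφt0]
    exact hφtβ
  · have htpos : 0 < t := lt_of_lt_of_le hspos hba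
    -- squared inequality
    have e1 : ‖κ t • a - κ s • b‖ ^ 2 = κ t ^ 2 * t ^ 2 + κ s ^ 2 * s ^ 2 - 2 * (κ t * κ s * c) := by
      rw [@norm_sub_sq_real, norm_smul, norm_smul, real_inner_smul_left, real_inner_smul_right]
      simp only [Real.norm_eq_abs, mul_pow, sq_abs]
      ring
    have e2 : ‖a - b‖ ^ 2 = t ^ 2 + s ^ 2 - 2 * c := by
      rw [@norm_sub_sq_real]; ring
    have hA : 0 ≤ t * s - c := by linarith
    have hB : 0 ≤ β ^ 2 * (t * s) - (κ t * t) * (κ s * s) := by nlinarith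
    have hφmono : 0 ≤ κ t * t - κ s * s :=
      le_trans (mul_nonneg hα.le (sub_nonneg.2 hba)) h1'
    have hsq : (κ t * t - κ s * s) ^ 2 ≤ (β * (t - s)) ^ 2 := pow_le_pow_left₀ hφmono h1 2
    have key : (t * s) * (κ t ^ 2 * t ^ 2 + κ s ^ 2 * s ^ 2 - 2 * (κ t * κ s * c))
        ≤ (t * s) * (β ^ 2 * (t ^ 2 + s ^ 2 - 2 * c)) := by
      nlinarith [mul_nonneg hA hB, mul_le_mul_of_nonneg_left hsq (mul_nonneg ht hs),
        mul_pos htpos hspos]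
    have key2 : κ t ^ 2 * t ^ 2 + κ s ^ 2 * s ^ 2 - 2 * (κ t * κ s * c)
        ≤ β ^ 2 * (t ^ 2 + s ^ 2 - 2 * c) :=
      le_of_mul_le_mul_left key (mul_pos htpos hspos)
    have hsq2 : ‖κ t • a - κ s • b‖ ^ 2 ≤ (β * ‖a - b‖) ^ 2 := by
      rw [e1, mul_pow, e2]; linarith
    have := (pow_le_pow_iff_left₀ (norm_nonneg _) (by positivity) (two_ne_zero)).1 hsq2
    simpa [htdef, hsdef] using this

private lemma pointwise_lip {E : Type*} [NormedAddCommGroup E] [InnerProductSpace ℝ E]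
    (κ : ℝ → ℝ) (α β : ℝ) (hα : 0 < α) (hαβ : α < β)
    (h : ∀ s t : ℝ, 0 ≤ s → s ≤ t →
      α * (t - s) ≤ κ t * t - κ s * s ∧ κ t * t - κ s * s ≤ β * (t - s))
    (a b : E) :
    ‖κ ‖a‖ • a - κ ‖b‖ • b‖ ≤ β * ‖a - b‖ := by
  rcases le_total ‖b‖ ‖a‖ with hba | hab
  · exact pointwise_lip_aux κ α β hα hαβ h a b hba
  · rw [norm_sub_rev, norm_sub_rev a b]
    exact pointwise_lip_aux κ α β hα hαβ h b a hab

/-- Lipschitz continuity of the weak Galerkin form `a_h` (Lemma 3.5):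
`|a_h(u₁;u₁,v) - a_h(u₂;u₂,v)| ≤ β |||u₁ - u₂||| |||v|||`, written with
`p = ∇_w u₁`, `q = ∇_w u₂`, `r = ∇_w v`. -/
theorem integrated_form_lipschitz
    {Ω : Type*} [MeasurableSpace Ω] (μ : Measure Ω) (d : ℕ) (hd : 1 ≤ d)
    (κ : ℝ → ℝ) (hκ : Measurable κ) (α β : ℝ) (hα : 0 < α) (hαβ : α < β)
    (h : ∀ s t : ℝ, 0 ≤ s → s ≤ t →
      α * (t - s) ≤ κ t * t - κ s * s ∧ κ t * t - κ s * s ≤ β * (t - s))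
    (p q r : Ω → EuclideanSpace ℝ (Fin d))
    (hp : Measurable p) (hq : Measurable q) (hr : Measurable r)
    (hp2 : Integrable (fun x => ‖p x‖ ^ 2) μ) (hq2 : Integrable (fun x => ‖q x‖ ^ 2) μ)
    (hr2 : Integrable (fun x => ‖r x‖ ^ 2) μ) :
    |∫ x, ⟪κ ‖p x‖ • p x - κ ‖q x‖ • q x, r x⟫ ∂μ|
      ≤ β * (∫ x, ‖p x - q x‖ ^ 2 ∂μ) ^ ((1 : ℝ) / 2)
          * (∫ x, ‖r x‖ ^ 2 ∂μ) ^ ((1 : ℝ) / 2) := by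
  have hβ : (0:ℝ) < β := hα.trans hαβ
  have hF : Measurable (fun x => κ ‖p x‖ • p x - κ ‖q x‖ • q x) :=
    ((hκ.comp hp.norm).smul hp).sub ((hκ.comp hq.norm).smul hq)
  have hpq : Measurable (fun x => p x - q x) := hp.sub hq
  -- L² membership
  have hpq2 : Integrable (fun x => ‖p x - q x‖ ^ 2) μ := by
    refine Integrable.mono' (((hp2.add hq2).const_mul 2)) ?_ ?_
    · exact (hpq.norm.pow_const 2).aestronglyMeasurable
    · refine Filter.Eventually.of_forall fun x => ?_
      have h1 := norm_sub_le (p x) (q x)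
      have h2 : (0:ℝ) ≤ ‖p x - q x‖ := norm_nonneg _
      simp only [Pi.add_apply]
      rw [Real.norm_eq_abs, abs_of_nonneg (by positivity)]
      nlinarith [pow_le_pow_left₀ h2 h1 2, sq_nonneg (‖p x‖ - ‖q x‖)]
  have hpqL2 : MemLp (fun x => p x - q x) 2 μ :=
    (memLp_two_iff_integrable_sq_norm hpq.aestronglyMeasurable).2 hpq2
  have hrL2 : MemLp r 2 μ :=
    (memLp_two_iff_integrable_sq_norm hr.aestronglyMeasurable).2 hr2
  -- integrability of the product of norms
  have hprod : Integrable (fun x => ‖p x - q x‖ * ‖r x‖) μ := by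
    refine Integrable.mono' (hpq2.add hr2) ?_ ?_
    · exact (hpq.norm.mul hr.norm).aestronglyMeasurable
    · refine Filter.Eventually.of_forall fun x => ?_
      simp only [Pi.add_apply]
      rw [Real.norm_eq_abs, abs_of_nonneg (by positivity)]
      nlinarith [sq_nonneg (‖p x - q x‖ - ‖r x‖), norm_nonneg (p x - q x), norm_nonneg (r x)]
  -- step 1: |∫ inner| ≤ ∫ β * (‖p-q‖ * ‖r‖)
  have step1 : |∫ x, ⟪κ ‖p x‖ • p x - κ ‖q x‖ • q x, r x⟫ ∂μ|
      ≤ ∫ x, β * (‖p x - q x‖ * ‖r x‖) ∂μ := by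
    calc |∫ x, ⟪κ ‖p x‖ • p x - κ ‖q x‖ • q x, r x⟫ ∂μ|
        = ‖∫ x, ⟪κ ‖p x‖ • p x - κ ‖q x‖ • q x, r x⟫ ∂μ‖ := (Real.norm_eq_abs _).symm
      _ ≤ ∫ x, ‖⟪κ ‖p x‖ • p x - κ ‖q x‖ • q x, r x⟫‖ ∂μ := norm_integral_le_integral_norm _
      _ ≤ ∫ x, β * (‖p x - q x‖ * ‖r x‖) ∂μ := by
          refine integral_mono_of_nonneg (Filter.Eventually.of_forall fun x => norm_nonneg _)
            (hprod.const_mul β) (Filter.Eventually.of_forall fun x => ?_)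
          have h1 : ‖⟪κ ‖p x‖ • p x - κ ‖q x‖ • q x, r x⟫‖
              ≤ ‖κ ‖p x‖ • p x - κ ‖q x‖ • q x‖ * ‖r x‖ := by
            rw [Real.norm_eq_abs]; exact abs_real_inner_le_norm _ _
          have h2 := pointwise_lip κ α β hα hαβ h (p x) (q x)
          calc ‖⟪κ ‖p x‖ • p x - κ ‖q x‖ • q x, r x⟫‖
              ≤ ‖κ ‖p x‖ • p x - κ ‖q x‖ • q x‖ * ‖r x‖ := h1
            _ ≤ (β * ‖p x - q x‖) * ‖r x‖ :=
                mul_le_mul_of_nonneg_right h2 (norm_nonneg _)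
            _ = β * (‖p x - q x‖ * ‖r x‖) := by ring
  -- step 2: Hölder
  have hconj : Real.HolderConjugate 2 2 := Real.HolderConjugate.two_two
  have hpqL2' : MemLp (fun x => ‖p x - q x‖) (ENNReal.ofReal 2) μ := by
    simpa [ENNReal.ofReal_ofNat] using hpqL2.norm
  have hrL2' : MemLp (fun x => ‖r x‖) (ENNReal.ofReal 2) μ := by
    simpa [ENNReal.ofReal_ofNat] using hrL2.norm
  have holder := integral_mul_le_Lp_mul_Lq_of_nonneg hconj
    (Filter.Eventually.of_forall fun x => norm_nonneg (p x - q x))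
    (Filter.Eventually.of_forall fun x => norm_nonneg (r x)) hpqL2' hrL2'
  have hr2' : ∀ (f : Ω → ℝ), (∫ x, f x ^ (2:ℝ) ∂μ) = ∫ x, f x ^ 2 ∂μ := by
    intro f
    refine integral_congr_ae (Filter.Eventually.of_forall fun x => ?_)
    show f x ^ (2:ℝ) = f x ^ 2
    rw [show ((2:ℝ)) = ((2:ℕ):ℝ) by norm_num, Real.rpow_natCast]
  rw [hr2' (fun x => ‖p x - q x‖), hr2' (fun x => ‖r x‖)] at holder
  calc |∫ x, ⟪κ ‖p x‖ • p x - κ ‖q x‖ • q x, r x⟫ ∂μ|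
      ≤ ∫ x, β * (‖p x - q x‖ * ‖r x‖) ∂μ := step1
    _ = β * ∫ x, ‖p x - q x‖ * ‖r x‖ ∂μ := integral_const_mul β _
    _ ≤ β * ((∫ x, ‖p x - q x‖ ^ 2 ∂μ) ^ ((1:ℝ)/2) * (∫ x, ‖r x‖ ^ 2 ∂μ) ^ ((1:ℝ)/2)) :=
        mul_le_mul_of_nonneg_left holder hβ.le
    _ = β * (∫ x, ‖p x - q x‖ ^ 2 ∂μ) ^ ((1:ℝ)/2) * (∫ x, ‖r x‖ ^ 2 ∂μ) ^ ((1:ℝ)/2) := by ring
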